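/- Suppose N ≠ ∅ and C ∪ L ≠ ∅. Define x* by x*_j = (β_j / ∑_{m∈L∪C} β_m) · R for all j ∈ C, and x*_{ij} = (β_j / ∑_{m∈L∪C} β_m) · R · exp(α_i / (1 + ∑_{k∈L} β_k)) / (∑_{m∈N} exp(α_m / (1 + ∑_{k∈L} β_k))) for all i ∈ N and all j ∈ L. Then x* is a global minimizer of B over the set 𝒳 of feasible budget allocations: for every feasible budget allocation x, B(x*) ≤ B(x). -/

import Mathlib

open Real Finset

/-- The function `B(x) = ∑_{i∈N} exp(α_i) / (∏_{j∈L} x_{ij}^{β_j} · ∏_{j∈C} x_j^{β_j})`. -/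
noncomputable def Bfun {N L C : Type*} [Fintype N] [Fintype L] [Fintype C]
    (α : N → ℝ) (β : L ⊕ C → ℝ) (x : (N → L → ℝ) × (C → ℝ)) : ℝ :=
  ∑ i : N, Real.exp (α i) /
    ((∏ j : L, x.1 i j ^ β (Sum.inl j)) * ∏ j : C, x.2 j ^ β (Sum.inr j))

/-- The overall pickpocket probability `P(x) = B(x) / (1 + B(x))`. -/
noncomputable def Pfun {N L C : Type*} [Fintype N] [Fintype L] [Fintype C]
    (α : N → ℝ) (β : L ⊕ C → ℝ) (x : (N → L → ℝ) × (C → ℝ)) : ℝ :=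
  Bfun α β x / (1 + Bfun α β x)

/-- A budget allocation has all entries strictly positive. -/
def PosAlloc {N L C : Type*} (x : (N → L → ℝ) × (C → ℝ)) : Prop :=
  (∀ i j, 0 < x.1 i j) ∧ ∀ j, 0 < x.2 j

/-- A budget allocation is feasible: positive entries, total spend at most `R`. -/
def FeasAlloc {N L C : Type*} [Fintype N] [Fintype L] [Fintype C]
    (R : ℝ) (x : (N → L → ℝ) × (C → ℝ)) : Prop :=
  PosAlloc x ∧ (∑ i : N, ∑ j : L, x.1 i j) + ∑ j : C, x.2 j ≤ R

/-- The candidate optimal budget allocation `x*`. -/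
noncomputable def xstar {N L C : Type*} [Fintype N] [Fintype L] [Fintype C]
    (R : ℝ) (α : N → ℝ) (β : L ⊕ C → ℝ) : (N → L → ℝ) × (C → ℝ) :=
  (fun i j => β (Sum.inl j) / (∑ m : L ⊕ C, β m) * R *
      (Real.exp (α i / (1 + ∑ k : L, β (Sum.inl k))) /
        ∑ m : N, Real.exp (α m / (1 + ∑ k : L, β (Sum.inl k)))),
   fun j => β (Sum.inr j) / (∑ m : L ⊕ C, β m) * R)


-- tangent-line lemma: 1/∏ y^b ≥ (1 + ∑ b (1 - y/s)) / ∏ s^b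
private lemma tangent_aux {J : Type*} [Fintype J] (y s b : J → ℝ)
    (hy : ∀ j, 0 < y j) (hs : ∀ j, 0 < s j) (hb : ∀ j, 0 < b j) :
    (1 + ∑ j, b j * (1 - y j / s j)) / ∏ j, s j ^ b j ≤ 1 / ∏ j, y j ^ b j := by
  have hPy : 0 < ∏ j, y j ^ b j := prod_pos fun j _ => rpow_pos_of_pos (hy j) _
  have hPs : 0 < ∏ j, s j ^ b j := prod_pos fun j _ => rpow_pos_of_pos (hs j) _
  have hratio : ∏ j, (s j / y j) ^ b j = (∏ j, s j ^ b j) / ∏ j, y j ^ b j := by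
    rw [← prod_div_distrib]
    exact Finset.prod_congr rfl fun j _ => Real.div_rpow (hs j).le (hy j).le _
  have key : 1 + ∑ j, b j * (1 - y j / s j) ≤ ∏ j, (s j / y j) ^ b j := by
    have hexp : ∏ j, (s j / y j) ^ b j = Real.exp (∑ j, Real.log (s j / y j) * b j) := by
      rw [Real.exp_sum]
      exact Finset.prod_congr rfl fun j _ =>
        (Real.rpow_def_of_pos (div_pos (hs j) (hy j)) _)
    rw [hexp]
    have h1 : ∑ j, b j * (1 - y j / s j) ≤ ∑ j, Real.log (s j / y j) * b j := by
      apply Finset.sum_le_sum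
      intro j _
      have hl : Real.log (y j / s j) ≤ y j / s j - 1 :=
        Real.log_le_sub_one_of_pos (div_pos (hy j) (hs j))
      have hneg : Real.log (s j / y j) = - Real.log (y j / s j) := by
        rw [← Real.log_inv, inv_div]
      have : 1 - y j / s j ≤ Real.log (s j / y j) := by rw [hneg]; linarith
      nlinarith [(hb j).le]
    have h2 := Real.add_one_le_exp (∑ j, Real.log (s j / y j) * b j)
    linarith
  rw [hratio] at key
  calc (1 + ∑ j, b j * (1 - y j / s j)) / ∏ j, s j ^ b j
      ≤ ((∏ j, s j ^ b j) / ∏ j, y j ^ b j) / ∏ j, s j ^ b j := by gcongr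
    _ = 1 / ∏ j, y j ^ b j := by field_simp

private lemma helper1 (a b c v t : ℝ) (ha : a ≠ 0) (hb : b ≠ 0) (hc : c ≠ 0) (hv : v ≠ 0) :
    a * (t / (a / b * c * v)) = b / c / v * t := by field_simp

private lemma helper2 (a b c t : ℝ) (ha : a ≠ 0) (hb : b ≠ 0) (hc : c ≠ 0) :
    a * (t / (a / b * c)) = b / c * t := by field_simp

private lemma helper3 (u p A B : ℝ) (hu : u ≠ 0) : u * (p / u * A + p * B) = p * (A + u * B) := by
  field_simp

set_option maxHeartbeats 1000000 in
theorem stmt_15 {N L C : Type*} [Fintype N] [Fintype L] [Fintype C]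
    [Nonempty N] [Nonempty (L ⊕ C)]
    (R : ℝ) (hR : 0 < R) (α : N → ℝ) (hα : ∀ i, 0 ≤ α i)
    (β : L ⊕ C → ℝ) (hβ : ∀ j, 0 < β j) :
    ∀ x : (N → L → ℝ) × (C → ℝ), FeasAlloc R x →
      Bfun α β (xstar R α β) ≤ Bfun α β x := by
  intro x hx
  obtain ⟨⟨hx1, hx2⟩, hbud⟩ := hx
  set BL : ℝ := ∑ k : L, β (Sum.inl k) with hBLdef
  set S : ℝ := ∑ m : L ⊕ C, β m with hSdef
  have hBL0 : 0 ≤ BL := Finset.sum_nonneg fun k _ => (hβ _).le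
  have hE : (0:ℝ) < 1 + BL := by linarith
  have hS : 0 < S := Finset.sum_pos (fun m _ => hβ m) univ_nonempty
  set W : ℝ := ∑ m : N, Real.exp (α m / (1 + BL)) with hWdef
  have hW0 : 0 < W := Finset.sum_pos (fun m _ => Real.exp_pos _) univ_nonempty
  set w : N → ℝ := fun i => Real.exp (α i / (1 + BL)) / W with hwdef
  have hw : ∀ i, 0 < w i := fun i => div_pos (Real.exp_pos _) hW0
  have hwsum : ∑ i, w i = 1 := by
    simp only [hwdef, ← Finset.sum_div]
    rw [← hWdef, div_self hW0.ne']
  -- xstar entries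
  have hxs1 : ∀ i j, (xstar R α β).1 i j = β (Sum.inl j) / S * R * w i := fun i j => rfl
  have hxs2 : ∀ j, (xstar R α β).2 j = β (Sum.inr j) / S * R := fun j => rfl
  set xs := xstar R α β with hxsdef
  -- denominators
  set D : ((N → L → ℝ) × (C → ℝ)) → N → ℝ := fun z i =>
    (∏ j : L, z.1 i j ^ β (Sum.inl j)) * ∏ j : C, z.2 j ^ β (Sum.inr j) with hDdef
  have hBfun : ∀ z, Bfun α β z = ∑ i, Real.exp (α i) / D z i := fun z => rfl
  have hcpos : ∀ j : L ⊕ C, 0 < β j / S * R := fun j =>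
    mul_pos (div_pos (hβ j) hS) hR
  have hxspos1 : ∀ i j, 0 < xs.1 i j := fun i j => mul_pos (hcpos _) (hw i)
  have hxspos2 : ∀ j, 0 < xs.2 j := fun j => hcpos _
  set KL : ℝ := ∏ j : L, (β (Sum.inl j) / S * R) ^ β (Sum.inl j) with hKLdef
  set KC : ℝ := ∏ j : C, (β (Sum.inr j) / S * R) ^ β (Sum.inr j) with hKCdef
  have hKL : 0 < KL := prod_pos fun j _ => rpow_pos_of_pos (hcpos _) _
  have hKC : 0 < KC := prod_pos fun j _ => rpow_pos_of_pos (hcpos _) _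
  have hDstar : ∀ i, D xs i = KL * w i ^ BL * KC := by
    intro i
    have h1 : ∏ j : L, xs.1 i j ^ β (Sum.inl j) = KL * w i ^ BL := by
      have h2 : ∀ j : L, xs.1 i j ^ β (Sum.inl j)
          = (β (Sum.inl j) / S * R) ^ β (Sum.inl j) * w i ^ β (Sum.inl j) := by
        intro j
        rw [hxs1 i j, Real.mul_rpow (hcpos _).le (hw i).le]
      rw [Finset.prod_congr rfl fun j _ => h2 j, Finset.prod_mul_distrib,
        ← Real.rpow_sum_of_pos (hw i)]
    have h3 : ∏ j : C, xs.2 j ^ β (Sum.inr j) = KC :=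
      Finset.prod_congr rfl fun j _ => by rw [hxs2 j]
    simp only [hDdef, h1, h3]
  have hexp_eq : ∀ i, Real.exp (α i) = (w i * W) ^ (1 + BL) := by
    intro i
    have h1 : w i * W = Real.exp (α i / (1 + BL)) := div_mul_cancel₀ _ hW0.ne'
    rw [h1, Real.rpow_def_of_pos (Real.exp_pos _), Real.log_exp,
      div_mul_cancel₀ _ hE.ne']
  set Bs : ℝ := W ^ (1 + BL) / (KL * KC) with hBsdef
  have hBspos : 0 < Bs := div_pos (rpow_pos_of_pos hW0 _) (mul_pos hKL hKC)
  have hTstar : ∀ i, Real.exp (α i) / D xs i = w i * Bs := by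
    intro i
    rw [hDstar i, hexp_eq i, Real.mul_rpow (hw i).le hW0.le,
      Real.rpow_add (hw i) 1 BL, Real.rpow_one, hBsdef]
    have hwBL : (0:ℝ) < w i ^ BL := rpow_pos_of_pos (hw i) _
    rw [← mul_div_assoc, div_eq_div_iff (by positivity) (by positivity)]
    ring
  have hBsval : Bfun α β xs = Bs := by
    rw [hBfun]
    calc ∑ i, Real.exp (α i) / D xs i = ∑ i, w i * Bs :=
          Finset.sum_congr rfl fun i _ => hTstar i
      _ = Bs := by rw [← Finset.sum_mul, hwsum, one_mul]
  -- tangent inequality per i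
  have hDx : ∀ i, D x i = ∏ m : L ⊕ C, Sum.elim (x.1 i) x.2 m ^ β m := by
    intro i; rw [Fintype.prod_sum_type]; rfl
  have hDxs : ∀ i, D xs i = ∏ m : L ⊕ C, Sum.elim (xs.1 i) xs.2 m ^ β m := by
    intro i; rw [Fintype.prod_sum_type]; rfl
  set Q : N → ℝ := fun i =>
    ∑ m : L ⊕ C, β m * (Sum.elim (x.1 i) x.2 m / Sum.elim (xs.1 i) xs.2 m) with hQdef
  have hmain : ∀ i, Real.exp (α i) / D xs i * (1 + S - Q i) ≤ Real.exp (α i) / D x i := by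
    intro i
    have hyp : ∀ m : L ⊕ C, 0 < Sum.elim (x.1 i) x.2 m := by
      rintro (j | j); exacts [hx1 i j, hx2 j]
    have hsp : ∀ m : L ⊕ C, 0 < Sum.elim (xs.1 i) xs.2 m := by
      rintro (j | j); exacts [hxspos1 i j, hxspos2 j]
    have ht := tangent_aux (Sum.elim (x.1 i) x.2) (Sum.elim (xs.1 i) xs.2) β hyp hsp hβ
    have hsum : 1 + ∑ m : L ⊕ C, β m *
        (1 - Sum.elim (x.1 i) x.2 m / Sum.elim (xs.1 i) xs.2 m) = 1 + S - Q i := by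
      simp only [mul_sub, mul_one, Finset.sum_sub_distrib, hQdef, hSdef]
      ring
    rw [hsum, ← hDxs i, ← hDx i] at ht
    have := mul_le_mul_of_nonneg_left ht (Real.exp_pos (α i)).le
    calc Real.exp (α i) / D xs i * (1 + S - Q i)
        = Real.exp (α i) * ((1 + S - Q i) / D xs i) := by ring
      _ ≤ Real.exp (α i) * (1 / D x i) := this
      _ = Real.exp (α i) / D x i := by ring
  -- compute weighted Q
  have hwQ : ∀ i, w i * Q i
      = S / R * ((∑ j : L, x.1 i j) + w i * ∑ j : C, x.2 j) := by
    intro i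
    simp only [hQdef]
    simp only [Fintype.sum_sum_type, Sum.elim_inl, Sum.elim_inr]
    have hL : ∀ j : L, β (Sum.inl j) * (x.1 i j / xs.1 i j)
        = S / R / w i * x.1 i j := by
      intro j
      rw [hxs1 i j]
      exact helper1 _ _ _ _ _ (hβ _).ne' hS.ne' hR.ne' (hw i).ne'
    have hC : ∀ j : C, β (Sum.inr j) * (x.2 j / xs.2 j) = S / R * x.2 j := by
      intro j
      rw [hxs2 j]
      exact helper2 _ _ _ _ (hβ _).ne' hS.ne' hR.ne'
    rw [Finset.sum_congr rfl fun j _ => hL j, Finset.sum_congr rfl fun j _ => hC j,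
      ← Finset.mul_sum, ← Finset.mul_sum]
    exact helper3 (w i) (S / R) _ _ (hw i).ne' 
  -- sum it all up
  have hQsum : ∑ i, w i * Bs * Q i ≤ Bs * S := by
    have h1 : ∑ i, w i * Bs * Q i = Bs * ∑ i, w i * Q i := by
      rw [Finset.mul_sum]; exact Finset.sum_congr rfl fun i _ => by ring
    rw [h1]
    have h2 : ∑ i, w i * Q i
        = S / R * ((∑ i, ∑ j : L, x.1 i j) + ∑ j : C, x.2 j) := by
      rw [Finset.sum_congr rfl fun i _ => hwQ i, ← Finset.mul_sum,
        Finset.sum_add_distrib, ← Finset.sum_mul, hwsum, one_mul]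
    rw [h2]
    have h3 : S / R * ((∑ i, ∑ j : L, x.1 i j) + ∑ j : C, x.2 j) ≤ S / R * R := by
      apply mul_le_mul_of_nonneg_left hbud (div_pos hS hR).le
    calc Bs * (S / R * ((∑ i, ∑ j : L, x.1 i j) + ∑ j : C, x.2 j))
        ≤ Bs * (S / R * R) := by exact mul_le_mul_of_nonneg_left h3 hBspos.le
      _ = Bs * S := by rw [div_mul_cancel₀ _ hR.ne']
  have hfinal : ∑ i, Real.exp (α i) / D xs i * (1 + S - Q i)
      = Bs * (1 + S) - ∑ i, w i * Bs * Q i := by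
    have he : ∀ i, Real.exp (α i) / D xs i * (1 + S - Q i)
        = w i * (Bs * (1 + S)) - w i * Bs * Q i := fun i => by rw [hTstar i]; ring
    rw [Finset.sum_congr rfl fun i _ => he i, Finset.sum_sub_distrib,
      ← Finset.sum_mul, hwsum, one_mul]
  have hBx : Bs * (1 + S) - ∑ i, w i * Bs * Q i ≤ Bfun α β x := by
    rw [hBfun, ← hfinal]
    exact Finset.sum_le_sum fun i _ => hmain i
  rw [hBsval]
  have hring : Bs * (1 + S) = Bs + Bs * S := by ring
  linarith
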